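/- Let A be a real symmetric n×n matrix, B a real n×p matrix, and C a real symmetric p×p matrix, and let Ã = [[A, B], [Bᵀ, C]] be the corresponding block matrix. Then rank à = rank A if and only if there exists a real n×p matrix W with A·W = B and C = Wᵀ·A·W. -/

import Mathlib

open Matrix Module

section Aux

variable {n p : ℕ}

/-- rank of a block matrix is at least the rank of its top-left block. -/
lemma aux_rank_le_fromBlocks (A : Matrix (Fin n) (Fin n) ℝ) (B : Matrix (Fin n) (Fin p) ℝ)
    (C : Matrix (Fin p) (Fin n) ℝ) (D : Matrix (Fin p) (Fin p) ℝ) :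
    A.rank ≤ (fromBlocks A B C D).rank := by
  have h : (fromCols (1 : Matrix (Fin n) (Fin n) ℝ) (0 : Matrix (Fin n) (Fin p) ℝ)) *
      fromBlocks A B C D * (fromRows (1 : Matrix (Fin n) (Fin n) ℝ)
        (0 : Matrix (Fin p) (Fin n) ℝ)) = A := by
    rw [fromCols_mul_fromBlocks, fromCols_mul_fromRows]
    simp
  conv_lhs => rw [← h]
  exact (Matrix.rank_mul_le_left _ _).trans (Matrix.rank_mul_le_right _ _)

lemma aux_range_fromColumns_zero (A : Matrix (Fin n) (Fin n) ℝ) :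
    LinearMap.range (fromCols A (0 : Matrix (Fin n) (Fin p) ℝ)).mulVecLin =
      LinearMap.range A.mulVecLin := by
  apply le_antisymm
  · have h : fromCols A (0 : Matrix (Fin n) (Fin p) ℝ) =
        A * fromCols (1 : Matrix (Fin n) (Fin n) ℝ) 0 := by
      rw [mul_fromCols]; simp
    rw [h, mulVecLin_mul]
    exact LinearMap.range_comp_le_range _ _
  · have h : A = fromCols A (0 : Matrix (Fin n) (Fin p) ℝ) *
        fromRows (1 : Matrix (Fin n) (Fin n) ℝ) (0 : Matrix (Fin p) (Fin n) ℝ) := by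
      rw [fromCols_mul_fromRows]; simp
    conv_lhs => rw [h]
    rw [mulVecLin_mul]
    exact LinearMap.range_comp_le_range _ _

/-- If the range of `B` is contained in the range of `A`, then `B = A * W` for some `W`. -/
lemma aux_exists_mul_eq {A : Matrix (Fin n) (Fin n) ℝ} {B : Matrix (Fin n) (Fin p) ℝ}
    (h : LinearMap.range B.mulVecLin ≤ LinearMap.range A.mulVecLin) :
    ∃ W : Matrix (Fin n) (Fin p) ℝ, A * W = B := by
  have hcol : ∀ j, ∃ w, A *ᵥ w = fun i => B i j := by
    intro j
    have hm : (fun i => B i j) ∈ LinearMap.range A.mulVecLin := by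
      apply h
      refine ⟨Pi.single j 1, ?_⟩
      ext i
      simp [mulVecLin_apply, mulVec_single]
    obtain ⟨w, hw⟩ := hm
    exact ⟨w, hw⟩
  choose w hw using hcol
  refine ⟨Matrix.of (fun i j => w j i), ?_⟩
  ext i j
  have := congrFun (hw j) i
  simpa [mul_apply, mulVec, dotProduct] using this

/-- If a block diagonal matrix has the same rank as its top-left block, the other block
is zero. -/
lemma aux_blockdiag (A : Matrix (Fin n) (Fin n) ℝ) (D : Matrix (Fin p) (Fin p) ℝ)
    (h : (fromBlocks A (0 : Matrix (Fin n) (Fin p) ℝ) (0 : Matrix (Fin p) (Fin n) ℝ) D).rank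
      = A.rank) : D = 0 := by
  set M := fromBlocks A (0 : Matrix (Fin n) (Fin p) ℝ) (0 : Matrix (Fin p) (Fin n) ℝ) D with hM
  set S := LinearMap.range M.mulVecLin with hS
  set P := fromCols (1 : Matrix (Fin n) (Fin n) ℝ) (0 : Matrix (Fin n) (Fin p) ℝ) with hP
  have hPM : P * M = fromCols A (0 : Matrix (Fin n) (Fin p) ℝ) := by
    rw [hP, hM, fromCols_mul_fromBlocks]
    simp
  set g := P.mulVecLin.comp S.subtype with hg
  have hrange : LinearMap.range g = LinearMap.range A.mulVecLin := by
    rw [hg, LinearMap.range_comp, Submodule.range_subtype, hS,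
      ← LinearMap.range_comp, ← mulVecLin_mul, hPM, aux_range_fromColumns_zero]
  have hfin : finrank ℝ (LinearMap.range g) + finrank ℝ (LinearMap.ker g) = finrank ℝ S :=
    LinearMap.finrank_range_add_finrank_ker g
  have hrank : finrank ℝ S = A.rank := h
  have hker : LinearMap.ker g = ⊥ := by
    have h0 : finrank ℝ (LinearMap.ker g) = 0 := by
      have : finrank ℝ (LinearMap.range g) = A.rank := by rw [hrange]; rfl
      omega
    exact Submodule.finrank_eq_zero.mp h0
  have hD : ∀ y, D *ᵥ y = 0 := by
    intro y
    have hu : Sum.elim (0 : Fin n → ℝ) (D *ᵥ y) ∈ S := by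
      refine ⟨Sum.elim (0 : Fin n → ℝ) y, ?_⟩
      rw [mulVecLin_apply, hM, fromBlocks_mulVec]
      simp
    have hgu : g ⟨_, hu⟩ = 0 := by
      rw [hg]
      simp only [LinearMap.comp_apply, Submodule.subtype_apply, mulVecLin_apply, hP]
      rw [fromCols_mulVec_sumElim]
      simp
    have : (⟨_, hu⟩ : S) = 0 := by
      rw [← Submodule.mem_bot ℝ, ← hker]
      exact LinearMap.mem_ker.mpr hgu
    have h0 : Sum.elim (0 : Fin n → ℝ) (D *ᵥ y) = 0 := congrArg Subtype.val this
    ext i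
    exact congrFun h0 (Sum.inr i)
  ext i j
  have := congrFun (hD (Pi.single j 1)) i
  simpa [mulVec_single] using this

end Aux

/-- **Smul'jan's theorem (flatness part).** For the block matrix
`Ã = [[A, B], [Bᵀ, C]]`, one has `rank Ã = rank A` iff there exists `W`
with `A * W = B` and `C = Wᵀ * A * W`. -/
theorem block_rank_eq_iff (n p : ℕ)
    (A : Matrix (Fin n) (Fin n) ℝ) (B : Matrix (Fin n) (Fin p) ℝ)
    (C : Matrix (Fin p) (Fin p) ℝ) (hA : A.IsSymm) (hC : C.IsSymm) :
    (Matrix.fromBlocks A B Bᵀ C).rank = A.rank ↔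
      ∃ W : Matrix (Fin n) (Fin p) ℝ, A * W = B ∧ C = Wᵀ * A * W := by
  constructor
  · intro h
    -- Step 1: find W with A * W = B
    have hN : (fromCols (1 : Matrix (Fin n) (Fin n) ℝ) (0 : Matrix (Fin n) (Fin p) ℝ)) *
        fromBlocks A B Bᵀ C = fromCols A B := by
      rw [fromCols_mul_fromBlocks]; simp
    set N := fromCols A B with hNdef
    have hrankN : N.rank = A.rank := by
      apply le_antisymm
      · calc N.rank = ((fromCols (1 : Matrix (Fin n) (Fin n) ℝ) 0) *
              fromBlocks A B Bᵀ C : Matrix (Fin n) (Fin n ⊕ Fin p) ℝ).rank := by rw [hN]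
          _ ≤ (fromBlocks A B Bᵀ C).rank := Matrix.rank_mul_le_right _ _
          _ = A.rank := h
      · have hA' : A = N * fromRows (1 : Matrix (Fin n) (Fin n) ℝ)
            (0 : Matrix (Fin p) (Fin n) ℝ) := by
          rw [hNdef, fromCols_mul_fromRows]; simp
        conv_lhs => rw [hA']
        exact Matrix.rank_mul_le_left _ _
    have hAleN : LinearMap.range A.mulVecLin ≤ LinearMap.range N.mulVecLin := by
      have hA' : A = N * fromRows (1 : Matrix (Fin n) (Fin n) ℝ)
          (0 : Matrix (Fin p) (Fin n) ℝ) := by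
        rw [hNdef, fromCols_mul_fromRows]; simp
      conv_lhs => rw [hA']
      rw [mulVecLin_mul]
      exact LinearMap.range_comp_le_range _ _
    have hBleN : LinearMap.range B.mulVecLin ≤ LinearMap.range N.mulVecLin := by
      have hB' : B = N * fromRows (0 : Matrix (Fin n) (Fin p) ℝ)
          (1 : Matrix (Fin p) (Fin p) ℝ) := by
        rw [hNdef, fromCols_mul_fromRows]; simp
      conv_lhs => rw [hB']
      rw [mulVecLin_mul]
      exact LinearMap.range_comp_le_range _ _
    have hAN : LinearMap.range A.mulVecLin = LinearMap.range N.mulVecLin := by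
      apply Submodule.eq_of_le_of_finrank_le hAleN
      show finrank ℝ (LinearMap.range N.mulVecLin) ≤ finrank ℝ (LinearMap.range A.mulVecLin)
      exact le_of_eq hrankN
    obtain ⟨W, hW⟩ := aux_exists_mul_eq (hBleN.trans hAN.ge)
    refine ⟨W, hW, ?_⟩
    -- Step 2: show C = Wᵀ * A * W
    have hBT : Bᵀ = Wᵀ * A := by
      rw [← hW, transpose_mul, hA.eq]
    have hcompute :
        fromBlocks (1 : Matrix (Fin n) (Fin n) ℝ) (0 : Matrix (Fin n) (Fin p) ℝ)
            (-Wᵀ) (1 : Matrix (Fin p) (Fin p) ℝ) *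
          fromBlocks A B Bᵀ C *
          fromBlocks (1 : Matrix (Fin n) (Fin n) ℝ) (-W)
            (0 : Matrix (Fin p) (Fin n) ℝ) (1 : Matrix (Fin p) (Fin p) ℝ) =
        fromBlocks A 0 0 (C - Wᵀ * A * W) := by
      rw [fromBlocks_multiply, fromBlocks_multiply, fromBlocks_inj]
      refine ⟨by simp, ?_, ?_, ?_⟩ <;>
        simp [← hW, transpose_mul, hA.eq, Matrix.mul_assoc, Matrix.neg_mul, Matrix.mul_neg,
          sub_eq_add_neg] <;> try abel
    have hdet₁ : IsUnit (fromBlocks (1 : Matrix (Fin n) (Fin n) ℝ)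
        (0 : Matrix (Fin n) (Fin p) ℝ) (-Wᵀ) (1 : Matrix (Fin p) (Fin p) ℝ)).det := by
      rw [det_fromBlocks_zero₁₂]; simp
    have hdet₂ : IsUnit (fromBlocks (1 : Matrix (Fin n) (Fin n) ℝ) (-W)
        (0 : Matrix (Fin p) (Fin n) ℝ) (1 : Matrix (Fin p) (Fin p) ℝ)).det := by
      rw [det_fromBlocks_zero₂₁]; simp
    have hrankM : (fromBlocks A (0 : Matrix (Fin n) (Fin p) ℝ)
        (0 : Matrix (Fin p) (Fin n) ℝ) (C - Wᵀ * A * W)).rank = A.rank := by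
      rw [← hcompute, Matrix.rank_mul_eq_left_of_isUnit_det _ _ hdet₂,
        Matrix.rank_mul_eq_right_of_isUnit_det _ _ hdet₁, h]
    have hz := aux_blockdiag A (C - Wᵀ * A * W) hrankM
    exact (sub_eq_zero.mp hz)
  · rintro ⟨W, hW, hC'⟩
    have hBT : Bᵀ = Wᵀ * A := by
      rw [← hW, transpose_mul, hA.eq]
    have hcompute :
        fromBlocks (1 : Matrix (Fin n) (Fin n) ℝ) (0 : Matrix (Fin n) (Fin p) ℝ)
            (Wᵀ) (1 : Matrix (Fin p) (Fin p) ℝ) *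
          fromBlocks A (0 : Matrix (Fin n) (Fin p) ℝ) (0 : Matrix (Fin p) (Fin n) ℝ)
            (0 : Matrix (Fin p) (Fin p) ℝ) *
          fromBlocks (1 : Matrix (Fin n) (Fin n) ℝ) W
            (0 : Matrix (Fin p) (Fin n) ℝ) (1 : Matrix (Fin p) (Fin p) ℝ) =
        fromBlocks A B Bᵀ C := by
      rw [fromBlocks_multiply, fromBlocks_multiply, fromBlocks_inj]
      refine ⟨by simp, ?_, ?_, ?_⟩ <;> simp [hW, hBT, hC', Matrix.mul_assoc]
    have hdet₁ : IsUnit (fromBlocks (1 : Matrix (Fin n) (Fin n) ℝ)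
        (0 : Matrix (Fin n) (Fin p) ℝ) (Wᵀ) (1 : Matrix (Fin p) (Fin p) ℝ)).det := by
      rw [det_fromBlocks_zero₁₂]; simp
    have hdet₂ : IsUnit (fromBlocks (1 : Matrix (Fin n) (Fin n) ℝ) W
        (0 : Matrix (Fin p) (Fin n) ℝ) (1 : Matrix (Fin p) (Fin p) ℝ)).det := by
      rw [det_fromBlocks_zero₂₁]; simp
    have hdiag : (fromBlocks A (0 : Matrix (Fin n) (Fin p) ℝ)
        (0 : Matrix (Fin p) (Fin n) ℝ) (0 : Matrix (Fin p) (Fin p) ℝ)).rank = A.rank := by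
      apply le_antisymm
      · have hfac : fromBlocks A (0 : Matrix (Fin n) (Fin p) ℝ)
            (0 : Matrix (Fin p) (Fin n) ℝ) (0 : Matrix (Fin p) (Fin p) ℝ) =
            fromRows (1 : Matrix (Fin n) (Fin n) ℝ) (0 : Matrix (Fin p) (Fin n) ℝ) * A *
              fromCols (1 : Matrix (Fin n) (Fin n) ℝ) (0 : Matrix (Fin n) (Fin p) ℝ) := by
          rw [fromRows_mul, Matrix.one_mul, Matrix.zero_mul, fromRows_mul_fromCols]
          simp
        rw [hfac]
        exact (Matrix.rank_mul_le_left _ _).trans (Matrix.rank_mul_le_right _ _)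
      · exact aux_rank_le_fromBlocks A _ _ _
    rw [← hcompute, Matrix.rank_mul_eq_left_of_isUnit_det _ _ hdet₂,
      Matrix.rank_mul_eq_right_of_isUnit_det _ _ hdet₁, hdiag]
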